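/- Every terminating CFTR program runs in native time polynomial in the input length: if p is a CFTR program that terminates on all inputs, then there is a polynomial π with time_p(x) ≤ π(|x|) for all x ∈ {0,1}*. -/

import Mathlib

/-! # Cons-free programs (CF / CFTR / CFpoly / NCF) and Turing-machine complexity classes -/

/-- Values: booleans and bit strings. -/
inductive Val : Type
  | bool : Bool → Val
  | str  : List Bool → Val
deriving DecidableEq, Inhabited

/-- Base operations of cons-free programs. -/
inductive BOp : Type
  | not | null | head | tail
deriving DecidableEq, Inhabited

/-- Expressions.  `amb` is the nondeterministic choice construct of NCF;
CF programs are exactly the choice-free programs. -/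
inductive Exp : Type
  | tt   : Exp
  | ff   : Exp
  | nil  : Exp
  | var  : Nat → Exp
  | base : BOp → Exp → Exp
  | ite  : Exp → Exp → Exp → Exp
  | call : Nat → List Exp → Exp
  | amb  : Exp → Exp → Exp
deriving Inhabited

/-- A function definition `f x1 ... xm = e`: arity `m` and body `e`
(variables are de Bruijn-style indices into the argument list). -/
structure Defn where
  arity : Nat
  body  : Exp
deriving Inhabited

/-- A program is a finite list of function definitions; the first one is the entry point. -/
abbrev Prog := List Defn

/-- Body of the entry (first) function. -/
def Prog.entry (p : Prog) : Exp := p.headI.body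

/-- Semantics of the base functions (partial). -/
def evalBase : BOp → Val → Option Val
  | .not,  .bool b       => some (.bool (!b))
  | .null, .str s        => some (.bool s.isEmpty)
  | .head, .str (b :: _) => some (.bool b)
  | .tail, .str (_ :: s) => some (.str s)
  | _,     _             => none

/- Call-by-value big-step semantics.  `EvalH p ρ e v n h` means: in environment `ρ`
the expression `e` evaluates to `v`, by a computation (proof) tree with `n` nodes
whose call history (the sequence of configurations `(f, arguments)` of calls to
program-defined functions, in evaluation order) is `h`. -/
mutual
inductive EvalH (p : Prog) : List Val → Exp → Val → Nat → List (Nat × List Val) → Prop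
  | tt  {ρ} : EvalH p ρ .tt (.bool true) 1 []
  | ff  {ρ} : EvalH p ρ .ff (.bool false) 1 []
  | nil {ρ} : EvalH p ρ .nil (.str []) 1 []
  | var {ρ : List Val} {i : Nat} {v} : ρ[i]? = some v → EvalH p ρ (.var i) v 1 []
  | base {ρ op e v w n h} :
      EvalH p ρ e v n h → evalBase op v = some w →
      EvalH p ρ (.base op e) w (n + 1) h
  | iteT {ρ e0 e1 e2 v n0 n1 h0 h1} :
      EvalH p ρ e0 (.bool true) n0 h0 → EvalH p ρ e1 v n1 h1 →
      EvalH p ρ (.ite e0 e1 e2) v (n0 + n1 + 1) (h0 ++ h1)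
  | iteF {ρ e0 e1 e2 v n0 n2 h0 h2} :
      EvalH p ρ e0 (.bool false) n0 h0 → EvalH p ρ e2 v n2 h2 →
      EvalH p ρ (.ite e0 e1 e2) v (n0 + n2 + 1) (h0 ++ h2)
  | ambL {ρ e1 e2 v n h} :
      EvalH p ρ e1 v n h → EvalH p ρ (.amb e1 e2) v (n + 1) h
  | ambR {ρ e1 e2 v n h} :
      EvalH p ρ e2 v n h → EvalH p ρ (.amb e1 e2) v (n + 1) h
  | call {ρ : List Val} {f : Nat} {es ws d v m n hs h} :
      p[f]? = some d → EvalArgsH p ρ es ws m hs → ws.length = d.arity →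
      EvalH p ws d.body v n h →
      EvalH p ρ (.call f es) v (m + n + 1) (hs ++ (f, ws) :: h)

inductive EvalArgsH (p : Prog) : List Val → List Exp → List Val → Nat → List (Nat × List Val) → Prop
  | nil {ρ} : EvalArgsH p ρ [] [] 0 []
  | cons {ρ e es v vs n m h hs} :
      EvalH p ρ e v n h → EvalArgsH p ρ es vs m hs →
      EvalArgsH p ρ (e :: es) (v :: vs) (n + m) (h ++ hs)
end

/-- `p, ρ ⊢ e → v`. -/
def Eval (p : Prog) (ρ : List Val) (e : Exp) (v : Val) : Prop := ∃ n h, EvalH p ρ e v n h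

/-- Pointwise evaluation of a list of expressions. -/
def EvalList (p : Prog) (ρ : List Val) (es : List Exp) (ws : List Val) : Prop :=
  List.Forall₂ (Eval p ρ) es ws

/-- `⟦p⟧(x) = v` with computation-tree size `n` and call history `h`. -/
def RunH (p : Prog) (x : List Bool) (v : Val) (n : Nat) (h : List (Nat × List Val)) : Prop :=
  EvalH p [Val.str x] p.entry v n h

/-- `⟦p⟧(x) = v`. -/
def Run (p : Prog) (x : List Bool) (v : Val) : Prop := ∃ n h, RunH p x v n h

/-- `time_p(x) = n`: the computation tree `T^{p,x}` has `n` nodes. -/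
def TimeIs (p : Prog) (x : List Bool) (n : Nat) : Prop := ∃ v h, RunH p x v n h

/-- Deterministic decision: `p` terminates on every input, answering `True` exactly on `X`. -/
def Decides (p : Prog) (X : Set (List Bool)) : Prop :=
  ∀ x : List Bool, (x ∈ X ∧ Run p x (.bool true)) ∨ (x ∉ X ∧ Run p x (.bool false))

/-- Nondeterministic decision: `x ∈ X` iff some computation `⟦p⟧(x) ⇝ True` exists. -/
def NDecides (p : Prog) (X : Set (List Bool)) : Prop :=
  ∀ x : List Bool, x ∈ X ↔ Run p x (.bool true)

/-- `Reach_p(x)`: configurations `(f, ρ)` called at least once in some computation of `p` on `x`. -/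
def Reach (p : Prog) (x : List Bool) : Set (Nat × List Val) :=
  {c | ∃ v n h, RunH p x v n h ∧ c ∈ h}

/-- `V_x = {0,1} ∪ suffixes(x)`: the range of variation on input `x`. -/
def Vx (x : List Bool) : Set Val :=
  {v | (∃ b, v = .bool b) ∨ ∃ s, v = .str s ∧ s <:+ x}

/-- An expression is choice-free (belongs to the CF fragment). -/
inductive NoChoice : Exp → Prop
  | tt : NoChoice .tt
  | ff : NoChoice .ff
  | nil : NoChoice .nil
  | var (i) : NoChoice (.var i)
  | base (op) {e} : NoChoice e → NoChoice (.base op e)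
  | ite {a b c} : NoChoice a → NoChoice b → NoChoice c → NoChoice (.ite a b c)
  | call (f) {es} : (∀ e ∈ es, NoChoice e) → NoChoice (.call f es)

/-- A CF program: a cons-free program with no nondeterministic choice. -/
def CFProg (p : Prog) : Prop := ∀ d ∈ p, NoChoice d.body

/-- Does the expression contain a call to a program-defined function? -/
def hasCall : Exp → Bool
  | .base _ e => hasCall e
  | .ite a b c => hasCall a || hasCall b || hasCall c
  | .call _ _ => true
  | .amb a b => hasCall a || hasCall b
  | _ => false

/-- The classification map `α` with `X = 0 < T = 1 < N = 2`:
`α e = 0` if `e` has no calls; `α e = 1` if all calls in `e` are in tail position;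
`α e = 2` otherwise. -/
def alpha : Exp → Nat
  | .base _ e => if hasCall e then 2 else 0
  | .ite a b c => if hasCall a then 2 else max (alpha b) (alpha c)
  | .call _ es => if es.all (fun e => !hasCall e) then 1 else 2
  | .amb a b => max (alpha a) (alpha b)
  | _ => 0

/-- All calls in every definition body are in tail position (`α(e^f) ∈ {X, T}`). -/
def TRProg (p : Prog) : Prop := ∀ d ∈ p, alpha d.body ≤ 1

/-- A CFTR program: a tail-recursive cons-free program. -/
def CFTRProg (p : Prog) : Prop := CFProg p ∧ TRProg p

/-- Every call in the program is a tail call or a linear call, i.e. no call to a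
defined function is nested inside the argument of another call. -/
def linearOnly : Exp → Bool
  | .base _ e => linearOnly e
  | .ite a b c => linearOnly a && linearOnly b && linearOnly c
  | .call _ es => es.all (fun e => !hasCall e)
  | .amb a b => linearOnly a && linearOnly b
  | _ => true

/-- A CFpoly program: a CF program that terminates on all inputs, in polynomial native time. -/
def CFpolyProg (p : Prog) : Prop :=
  CFProg p ∧ (∀ x, ∃ v, Run p x v) ∧
    ∃ π : Polynomial ℕ, ∀ x n, TimeIs p x n → n ≤ π.eval x.length

/-- A judgment `p, ρ ⊢ e → v` occurs in the computation tree `T^{p,x}`. -/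
inductive Occurs (p : Prog) (x : List Bool) : List Val → Exp → Val → Prop
  | root {v} : Eval p [Val.str x] p.entry v → Occurs p x [Val.str x] p.entry v
  | base {ρ op e v w} : Occurs p x ρ (.base op e) v → Eval p ρ e w → Occurs p x ρ e w
  | iteTest {ρ a b c v w} : Occurs p x ρ (.ite a b c) v → Eval p ρ a w → Occurs p x ρ a w
  | iteT {ρ a b c v} : Occurs p x ρ (.ite a b c) v → Eval p ρ a (.bool true) →
      Eval p ρ b v → Occurs p x ρ b v
  | iteF {ρ a b c v} : Occurs p x ρ (.ite a b c) v → Eval p ρ a (.bool false) →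
      Eval p ρ c v → Occurs p x ρ c v
  | ambL {ρ a b v} : Occurs p x ρ (.amb a b) v → Eval p ρ a v → Occurs p x ρ a v
  | ambR {ρ a b v} : Occurs p x ρ (.amb a b) v → Eval p ρ b v → Occurs p x ρ b v
  | arg {ρ f es v e w} : Occurs p x ρ (.call f es) v → e ∈ es → Eval p ρ e w → Occurs p x ρ e w
  | body {ρ f es ws d v} : Occurs p x ρ (.call f es) v → p[f]? = some d →
      EvalList p ρ es ws → Eval p ws d.body v → Occurs p x ws d.body v

/- The deterministic left-to-right bottom-up evaluator, with fuel bounding call depth. -/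
mutual
def evalFuel (p : Prog) : Nat → List Val → Exp → Option Val
  | _, _, .tt => some (.bool true)
  | _, _, .ff => some (.bool false)
  | _, _, .nil => some (.str [])
  | _, ρ, .var i => ρ[i]?
  | k, ρ, .base op e => (evalFuel p k ρ e).bind (evalBase op)
  | k, ρ, .ite a b c =>
      match evalFuel p k ρ a with
      | some (.bool true) => evalFuel p k ρ b
      | some (.bool false) => evalFuel p k ρ c
      | _ => none
  | _, _, .amb _ _ => none
  | k, ρ, .call f es =>
      match evalArgsFuel p k ρ es with
      | some ws =>
          match k, p[f]? with
          | k' + 1, some d => if ws.length = d.arity then evalFuel p k' ws d.body else none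
          | _, _ => none
      | none => none
termination_by k _ e => (k, sizeOf e)
decreasing_by
  all_goals first
    | decreasing_tactic
    | exact Prod.Lex.left _ _ (Nat.lt_succ_self _)
    | (simp_wf; exact Prod.Lex.left _ _ (Nat.lt_succ_self _))

def evalArgsFuel (p : Prog) : Nat → List Val → List Exp → Option (List Val)
  | _, _, [] => some []
  | k, ρ, e :: es =>
      match evalFuel p k ρ e, evalArgsFuel p k ρ es with
      | some v, some vs => some (v :: vs)
      | _, _ => none
termination_by k _ es => (k, sizeOf es)
end

/-! ## Turing machines -/

/-- Head moves. -/
inductive Dir : Type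
  | L | S | R
deriving DecidableEq, Inhabited

def Dir.z : Dir → ℤ
  | .L => -1
  | .S => 0
  | .R => 1

/-- A configuration: control state, input-head position, work-head position, work tape. -/
structure Cfg (Q : Type) where
  q : Q
  ipos : ℤ
  wpos : ℤ
  tape : ℤ → Option Bool

/-- The symbol of the read-only input tape at position `i` (blank outside the input). -/
def inputSym (x : List Bool) (i : ℤ) : Option Bool :=
  if 0 ≤ i then x[i.toNat]? else none

/-- A deterministic Turing machine with a read-only input tape and a read-write work tape. -/
structure TM where
  Q : Type
  [fin : Fintype Q]
  [deq : DecidableEq Q]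
  δ : Q → Option Bool → Option Bool → Q × Option Bool × Dir × Dir
  start : Q
  accept : Q
  reject : Q

attribute [instance] TM.fin TM.deq

def TM.init (M : TM) : Cfg M.Q := ⟨M.start, 0, 0, fun _ => none⟩

/-- One deterministic step (the accepting and rejecting states are halting). -/
def TM.step (M : TM) (x : List Bool) (c : Cfg M.Q) : Cfg M.Q :=
  if c.q = M.accept ∨ c.q = M.reject then c
  else
    let r := M.δ c.q (inputSym x c.ipos) (c.tape c.wpos)
    ⟨r.1, c.ipos + r.2.2.1.z, c.wpos + r.2.2.2.z,
      fun j => if j = c.wpos then r.2.1 else c.tape j⟩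

/-- Configuration after `t` steps on input `x`. -/
def TM.conf (M : TM) (x : List Bool) (t : Nat) : Cfg M.Q := (M.step x)^[t] M.init

/-- `M` decides `X`: reaches `accept` on members, `reject` on non-members. -/
def TM.DecidesTM (M : TM) (X : Set (List Bool)) : Prop :=
  ∀ x : List Bool,
    (x ∈ X → ∃ t, (M.conf x t).q = M.accept) ∧ (x ∉ X → ∃ t, (M.conf x t).q = M.reject)

/-- The work head of `M` stays within `s` cells of the origin on input `x`. -/
def TM.SpaceBound (M : TM) (x : List Bool) (s : Nat) : Prop :=
  ∀ t, ((M.conf x t).wpos).natAbs ≤ s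

/-- `M` halts within `T` steps on input `x`. -/
def TM.HaltsIn (M : TM) (x : List Bool) (T : Nat) : Prop :=
  ∃ t ≤ T, (M.conf x t).q = M.accept ∨ (M.conf x t).q = M.reject

/-- LOGSPACE: decidable by a deterministic TM in `O(log n)` work space. -/
def LOGSPACE : Set (Set (List Bool)) :=
  {X | ∃ M : TM, M.DecidesTM X ∧
        ∃ C : Nat, ∀ x, M.SpaceBound x (C * (Nat.log 2 x.length + 1))}

/-- PTIME: decidable by a deterministic TM in time `O(n^k)` for some `k`. -/
def PTIME : Set (Set (List Bool)) :=
  {X | ∃ M : TM, M.DecidesTM X ∧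
        ∃ C k : Nat, ∀ x, M.HaltsIn x (C * (x.length + 1) ^ k)}

/-- A nondeterministic Turing machine (read-only input tape, read-write work tape). -/
structure NTM where
  Q : Type
  [fin : Fintype Q]
  δ : Q → Option Bool → Option Bool → Finset (Q × Option Bool × Dir × Dir)
  start : Q
  accept : Q

attribute [instance] NTM.fin

def NTM.init (M : NTM) : Cfg M.Q := ⟨M.start, 0, 0, fun _ => none⟩

/-- One nondeterministic step. -/
def NTM.Step (M : NTM) (x : List Bool) (c c' : Cfg M.Q) : Prop :=
  ∃ r ∈ M.δ c.q (inputSym x c.ipos) (c.tape c.wpos),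
    c' = ⟨r.1, c.ipos + r.2.2.1.z, c.wpos + r.2.2.2.z,
          fun j => if j = c.wpos then r.2.1 else c.tape j⟩

/-- A step staying within work space `s`. -/
def NTM.StepB (M : NTM) (x : List Bool) (s : Nat) (c c' : Cfg M.Q) : Prop :=
  M.Step x c c' ∧ c'.wpos.natAbs ≤ s

/-- Some computation path within work space `s` accepts `x`. -/
def NTM.AcceptsInSpace (M : NTM) (x : List Bool) (s : Nat) : Prop :=
  ∃ c : Cfg M.Q, Relation.ReflTransGen (M.StepB x s) M.init c ∧ c.q = M.accept

/-- Nondeterministic space classes `NSPACE(O(f))`. -/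
def NSPACEF (f : Nat → Nat) : Set (Set (List Bool)) :=
  {X | ∃ (M : NTM) (C : Nat), ∀ x, x ∈ X ↔ M.AcceptsInSpace x (C * (f x.length + 1))}

/-- NLOGSPACE = NSPACE(O(log n)). -/
def NLOGSPACE : Set (Set (List Bool)) := NSPACEF (Nat.log 2)

/-! ## Decision classes of the programming languages -/

def decideCFTR : Set (Set (List Bool)) := {X | ∃ p : Prog, CFTRProg p ∧ Decides p X}
def decideCF : Set (Set (List Bool)) := {X | ∃ p : Prog, CFProg p ∧ Decides p X}
def decideCFpoly : Set (Set (List Bool)) := {X | ∃ p : Prog, CFpolyProg p ∧ Decides p X}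
def decideNCF : Set (Set (List Bool)) := {X | ∃ p : Prog, NDecides p X}
def decideNCFTR : Set (Set (List Bool)) := {X | ∃ p : Prog, TRProg p ∧ NDecides p X}


mutual
def esize : Exp → Nat
  | .tt => 1
  | .ff => 1
  | .nil => 1
  | .var _ => 1
  | .base _ e => esize e + 1
  | .ite a b c => esize a + esize b + esize c + 1
  | .call _ es => esizeL es + 1
  | .amb a b => esize a + esize b + 1
def esizeL : List Exp → Nat
  | [] => 0
  | e :: es => esize e + esizeL es
end

theorem noCall_eval (p : Prog) : ∀ n ρ e v h, hasCall e = false → EvalH p ρ e v n h →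
    h = [] ∧ n ≤ esize e := by
  intro n
  induction n using Nat.strong_induction_on with
  | _ n IH =>
  intro ρ e v h hc he
  cases he with
  | tt => exact ⟨rfl, le_refl _⟩
  | ff => exact ⟨rfl, le_refl _⟩
  | nil => exact ⟨rfl, le_refl _⟩
  | var _ => exact ⟨rfl, le_refl _⟩
  | base h1 _ =>
    simp only [hasCall] at hc
    obtain ⟨rfl, h2'⟩ := IH _ (by omega) _ _ _ _ hc h1
    exact ⟨rfl, by simp [esize]; omega⟩
  | iteT h1 h2 =>
    simp only [hasCall, Bool.or_eq_false_iff] at hc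
    obtain ⟨⟨hca, hcb⟩, hcc⟩ := hc
    obtain ⟨rfl, b1⟩ := IH _ (by omega) _ _ _ _ hca h1
    obtain ⟨rfl, b2⟩ := IH _ (by omega) _ _ _ _ hcb h2
    exact ⟨rfl, by simp [esize]; omega⟩
  | iteF h1 h2 =>
    simp only [hasCall, Bool.or_eq_false_iff] at hc
    obtain ⟨⟨hca, hcb⟩, hcc⟩ := hc
    obtain ⟨rfl, b1⟩ := IH _ (by omega) _ _ _ _ hca h1
    obtain ⟨rfl, b2⟩ := IH _ (by omega) _ _ _ _ hcc h2
    exact ⟨rfl, by simp [esize]; omega⟩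
  | ambL h1 =>
    simp only [hasCall, Bool.or_eq_false_iff] at hc
    obtain ⟨rfl, b1⟩ := IH _ (by omega) _ _ _ _ hc.1 h1
    exact ⟨rfl, by simp [esize]; omega⟩
  | ambR h1 =>
    simp only [hasCall, Bool.or_eq_false_iff] at hc
    obtain ⟨rfl, b1⟩ := IH _ (by omega) _ _ _ _ hc.2 h1
    exact ⟨rfl, by simp [esize]; omega⟩
  | call _ _ _ _ => simp [hasCall] at hc

theorem noCall_args (p : Prog) : ∀ es ρ ws m hs, (∀ e ∈ es, hasCall e = false) →
    EvalArgsH p ρ es ws m hs → hs = [] ∧ m ≤ esizeL es := by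
  intro es
  induction es with
  | nil =>
    intro _ _ _ _ _ h
    cases h
    exact ⟨rfl, by simp [esizeL]⟩
  | cons e es ih =>
    intro ρ ws m hs hc h
    cases h with
    | cons h1 h2 =>
      obtain ⟨rfl, b1⟩ := noCall_eval p _ _ _ _ _ (hc e (by simp)) h1
      obtain ⟨rfl, b2⟩ := ih _ _ _ _ (fun e' he' => hc e' (by simp [he'])) h2
      exact ⟨rfl, by simp [esizeL]; omega⟩

theorem args_det (p : Prog) {N : ℕ}
    (IH : ∀ n ρ e v h v' n' h', n ≤ N → NoChoice e → EvalH p ρ e v n h →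
      EvalH p ρ e v' n' h' → v = v' ∧ n = n' ∧ h = h') :
    ∀ es ρ ws m hs ws' m' hs', m ≤ N → (∀ e ∈ es, NoChoice e) →
      EvalArgsH p ρ es ws m hs → EvalArgsH p ρ es ws' m' hs' →
      ws = ws' ∧ m = m' ∧ hs = hs' := by
  intro es
  induction es with
  | nil =>
    intro ρ ws m hs ws' m' hs' _ _ h1 h2
    cases h1; cases h2; exact ⟨rfl, rfl, rfl⟩
  | cons e es ih =>
    intro ρ ws m hs ws' m' hs' hm hc h1 h2
    cases h1 with
    | cons he1 hes1 =>
      cases h2 with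
      | cons he2 hes2 =>
        obtain ⟨rfl, rfl, rfl⟩ := IH _ _ _ _ _ _ _ _ (by omega) (hc e (by simp)) he1 he2
        obtain ⟨rfl, rfl, rfl⟩ := ih _ _ _ _ _ _ _ (by omega)
          (fun e' he' => hc e' (by simp [he'])) hes1 hes2
        exact ⟨rfl, rfl, rfl⟩

theorem evalH_det (p : Prog) (hp : CFProg p) :
    ∀ N n ρ e v h v' n' h', n ≤ N → NoChoice e → EvalH p ρ e v n h →
      EvalH p ρ e v' n' h' → v = v' ∧ n = n' ∧ h = h' := by
  intro N
  induction N with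
  | zero =>
    intro n ρ e v h v' n' h' hn hc h1 h2
    cases h1 <;> omega
  | succ N IH =>
    intro n ρ e v h v' n' h' hn hc h1 h2
    cases h1 with
    | tt => cases h2 with | tt => exact ⟨rfl, rfl, rfl⟩
    | ff => cases h2 with | ff => exact ⟨rfl, rfl, rfl⟩
    | nil => cases h2 with | nil => exact ⟨rfl, rfl, rfl⟩
    | var g1 => cases h2 with
      | var g2 => rw [g1] at g2; exact ⟨Option.some.inj g2, rfl, rfl⟩
    | base g1 g2 =>
      cases hc with | base _ hce =>
      cases h2 with
      | base g1' g2' =>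
        obtain ⟨rfl, rfl, rfl⟩ := IH _ _ _ _ _ _ _ _ (by omega) hce g1 g1'
        rw [g2] at g2'
        exact ⟨Option.some.inj g2', rfl, rfl⟩
    | iteT g1 g2 =>
      cases hc with | ite hca hcb hcc =>
      cases h2 with
      | iteT g1' g2' =>
        obtain ⟨_, rfl, rfl⟩ := IH _ _ _ _ _ _ _ _ (by omega) hca g1 g1'
        obtain ⟨rfl, rfl, rfl⟩ := IH _ _ _ _ _ _ _ _ (by omega) hcb g2 g2'
        exact ⟨rfl, rfl, rfl⟩
      | iteF g1' g2' =>
        obtain ⟨hv, _, _⟩ := IH _ _ _ _ _ _ _ _ (by omega) hca g1 g1'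
        simp at hv
    | iteF g1 g2 =>
      cases hc with | ite hca hcb hcc =>
      cases h2 with
      | iteF g1' g2' =>
        obtain ⟨_, rfl, rfl⟩ := IH _ _ _ _ _ _ _ _ (by omega) hca g1 g1'
        obtain ⟨rfl, rfl, rfl⟩ := IH _ _ _ _ _ _ _ _ (by omega) hcc g2 g2'
        exact ⟨rfl, rfl, rfl⟩
      | iteT g1' g2' =>
        obtain ⟨hv, _, _⟩ := IH _ _ _ _ _ _ _ _ (by omega) hca g1 g1'
        simp at hv
    | ambL g1 => cases hc
    | ambR g1 => cases hc
    | call gf gargs garity gbody =>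
      cases hc with | call f hces =>
      cases h2 with
      | call gf' gargs' garity' gbody' =>
        obtain ⟨rfl, rfl, rfl⟩ := args_det p (N := N) IH _ _ _ _ _ _ _ _ (by omega) hces gargs gargs'
        rw [gf] at gf'
        obtain rfl := Option.some.inj gf'
        obtain ⟨hlt, heq⟩ := List.getElem?_eq_some_iff.1 gf
        have hd := List.getElem_mem hlt
        rw [heq] at hd
        obtain ⟨rfl, rfl, rfl⟩ := IH _ _ _ _ _ _ _ _ (by omega) (hp _ hd) gbody gbody'
        exact ⟨rfl, rfl, rfl⟩

theorem vx_base {x : List Bool} {op v w} (hv : v ∈ Vx x) (hb : evalBase op v = some w) :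
    w ∈ Vx x := by
  cases op <;> cases v <;> simp [evalBase] at hb
  · exact Or.inl ⟨_, hb.symm⟩
  · exact Or.inl ⟨_, hb.symm⟩
  · rename_i s
    cases s with
    | nil => simp [evalBase] at hb
    | cons b s => simp [evalBase] at hb; exact Or.inl ⟨_, hb.symm⟩
  · rename_i s
    cases s with
    | nil => simp [evalBase] at hb
    | cons b s =>
      simp [evalBase] at hb
      refine Or.inr ⟨s, hb.symm, ?_⟩
      have hsuf : (b :: s) <:+ x := by
        rcases hv with ⟨_, h⟩ | ⟨s', hs', h⟩
        · simp at h
        · cases hs'; exact h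
      exact (List.suffix_cons b s).trans hsuf

def HistOK (p : Prog) (x : List Bool) (h : List (Nat × List Val)) : Prop :=
  ∀ c ∈ h, (∃ d, p[c.1]? = some d ∧ c.2.length = d.arity) ∧ ∀ u ∈ c.2, u ∈ Vx x

theorem histOK_nil {p x} : HistOK p x [] := by intro c hc; simp at hc

theorem histOK_append {p x h1 h2} (a : HistOK p x h1) (b : HistOK p x h2) :
    HistOK p x (h1 ++ h2) := by
  intro c hc
  rcases List.mem_append.1 hc with h | h
  · exact a c h
  · exact b c h

theorem vx_args (p : Prog) (x : List Bool) {N : ℕ}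
    (IH : ∀ n ρ e v h, n < N → (∀ u ∈ ρ, u ∈ Vx x) → EvalH p ρ e v n h →
      v ∈ Vx x ∧ HistOK p x h) :
    ∀ es ρ ws m hs, m < N → (∀ u ∈ ρ, u ∈ Vx x) → EvalArgsH p ρ es ws m hs →
      (∀ u ∈ ws, u ∈ Vx x) ∧ HistOK p x hs := by
  intro es
  induction es with
  | nil =>
    intro ρ ws m hs _ _ h
    cases h
    exact ⟨by simp, histOK_nil⟩
  | cons e es ih =>
    intro ρ ws m hs hm hρ h
    cases h with
    | cons h1 h2 =>
      obtain ⟨v1, k1⟩ := IH _ _ _ _ _ (by omega) hρ h1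
      obtain ⟨v2, k2⟩ := ih _ _ _ _ (by omega) hρ h2
      refine ⟨?_, histOK_append k1 k2⟩
      intro u hu
      rcases List.mem_cons.1 hu with rfl | hu
      · exact v1
      · exact v2 u hu

theorem vx_eval (p : Prog) (x : List Bool) : ∀ n ρ e v h, (∀ u ∈ ρ, u ∈ Vx x) →
    EvalH p ρ e v n h → v ∈ Vx x ∧ HistOK p x h := by
  intro n
  induction n using Nat.strong_induction_on with
  | _ n IH =>
  intro ρ e v h hρ he
  cases he with
  | tt => exact ⟨Or.inl ⟨_, rfl⟩, histOK_nil⟩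
  | ff => exact ⟨Or.inl ⟨_, rfl⟩, histOK_nil⟩
  | nil => exact ⟨Or.inr ⟨[], rfl, List.nil_suffix⟩, histOK_nil⟩
  | var g =>
    refine ⟨hρ _ ?_, histOK_nil⟩
    obtain ⟨hlt, rfl⟩ := List.getElem?_eq_some_iff.1 g
    exact List.getElem_mem hlt
  | base g1 g2 =>
    obtain ⟨hv, hh⟩ := IH _ (by omega) _ _ _ _ hρ g1
    exact ⟨vx_base hv g2, hh⟩
  | iteT g1 g2 =>
    obtain ⟨_, hh1⟩ := IH _ (by omega) _ _ _ _ hρ g1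
    obtain ⟨hv, hh2⟩ := IH _ (by omega) _ _ _ _ hρ g2
    exact ⟨hv, histOK_append hh1 hh2⟩
  | iteF g1 g2 =>
    obtain ⟨_, hh1⟩ := IH _ (by omega) _ _ _ _ hρ g1
    obtain ⟨hv, hh2⟩ := IH _ (by omega) _ _ _ _ hρ g2
    exact ⟨hv, histOK_append hh1 hh2⟩
  | ambL g1 =>
    obtain ⟨hv, hh⟩ := IH _ (by omega) _ _ _ _ hρ g1
    exact ⟨hv, hh⟩
  | ambR g1 =>
    obtain ⟨hv, hh⟩ := IH _ (by omega) _ _ _ _ hρ g1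
    exact ⟨hv, hh⟩
  | call gf gargs garity gbody =>
    rename_i fn es ws d m nb hs hb
    obtain ⟨hws, hhs⟩ := vx_args p x (N := m + nb + 1) (fun k ρ' e' v' h' hk hρ' =>
      IH k hk ρ' e' v' h' hρ') _ _ _ _ _ (by omega) hρ gargs
    obtain ⟨hv, hh⟩ := IH _ (by omega) _ _ _ _ hws gbody
    refine ⟨hv, histOK_append hhs ?_⟩
    intro c hc
    rcases List.mem_cons.1 hc with rfl | hc
    · exact ⟨⟨d, gf, garity⟩, hws⟩
    · exact hh c hc

def maxArity (p : Prog) : ℕ := p.foldr (fun d a => max d.arity a) 0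
def maxBody (p : Prog) : ℕ := p.foldr (fun d a => max (esize d.body) a) 0

theorem arity_le_maxArity {p : Prog} {d} (hd : d ∈ p) : d.arity ≤ maxArity p := by
  induction p with
  | nil => cases hd
  | cons e p ih =>
    rcases List.mem_cons.1 hd with rfl | hd
    · simp [maxArity]
    · exact le_trans (ih hd) (by simp [maxArity])

theorem body_le_maxBody {p : Prog} {d} (hd : d ∈ p) : esize d.body ≤ maxBody p := by
  induction p with
  | nil => cases hd
  | cons e p ih =>
    rcases List.mem_cons.1 hd with rfl | hd
    · simp [maxBody]
    · exact le_trans (ih hd) (by simp [maxBody])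

theorem mem_of_getElem? {p : Prog} {f : ℕ} {d} (h : p[f]? = some d) : d ∈ p := by
  obtain ⟨hlt, heq⟩ := List.getElem?_eq_some_iff.1 h
  have := List.getElem_mem hlt
  rwa [heq] at this

theorem tail_eval (p : Prog) (hT : TRProg p) :
    ∀ n ρ e v h, alpha e ≤ 1 → EvalH p ρ e v n h →
      n ≤ esize e + maxBody p * h.length ∧
      ∀ h0 f ws h1, h = h0 ++ (f, ws) :: h1 →
        ∃ d n', p[f]? = some d ∧ ws.length = d.arity ∧ EvalH p ws d.body v n' h1 := by
  intro n
  induction n using Nat.strong_induction_on with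
  | _ n IH =>
  intro ρ e v h ha he
  cases he with
  | tt => exact ⟨by simp [esize], by intro h0 f ws h1 hh; simp at hh⟩
  | ff => exact ⟨by simp [esize], by intro h0 f ws h1 hh; simp at hh⟩
  | nil => exact ⟨by simp [esize], by intro h0 f ws h1 hh; simp at hh⟩
  | var _ => exact ⟨by simp [esize], by intro h0 f ws h1 hh; simp at hh⟩
  | base g1 g2 =>
    rename_i op e' w nn
    have hce : hasCall e' = false := by
      by_contra hcc
      simp only [Bool.not_eq_false] at hcc
      simp [alpha, hcc] at ha
    obtain ⟨rfl, hb⟩ := noCall_eval p _ _ _ _ _ hce g1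
    exact ⟨by simp [esize]; omega, by intro h0 f ws h1 hh; simp at hh⟩
  | iteT g1 g2 =>
    rename_i e0 e1 e2 n0 n1 h0' h1'
    have hce : hasCall e0 = false := by
      by_contra hcc
      simp only [Bool.not_eq_false] at hcc
      simp [alpha, hcc] at ha
    have ha1 : alpha e1 ≤ 1 := by
      simp [alpha, hce] at ha
      omega
    obtain ⟨rfl, hb0⟩ := noCall_eval p _ _ _ _ _ hce g1
    obtain ⟨hb1, hs1⟩ := IH _ (by omega) _ _ _ _ ha1 g2
    constructor
    · simp [esize]; omega
    · intro h0 f ws h1 hh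
      simp at hh
      exact hs1 h0 f ws h1 hh
  | iteF g1 g2 =>
    rename_i e0 e1 e2 n0 n2 h0' h2'
    have hce : hasCall e0 = false := by
      by_contra hcc
      simp only [Bool.not_eq_false] at hcc
      simp [alpha, hcc] at ha
    have ha2 : alpha e2 ≤ 1 := by
      simp [alpha, hce] at ha
      omega
    obtain ⟨rfl, hb0⟩ := noCall_eval p _ _ _ _ _ hce g1
    obtain ⟨hb1, hs1⟩ := IH _ (by omega) _ _ _ _ ha2 g2
    constructor
    · simp [esize]; omega
    · intro h0 f ws h1 hh
      simp at hh
      exact hs1 h0 f ws h1 hh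
  | ambL g1 =>
    rename_i e1 e2 nn
    have ha1 : alpha e1 ≤ 1 := by simp [alpha] at ha; omega
    obtain ⟨hb, hs⟩ := IH _ (by omega) _ _ _ _ ha1 g1
    exact ⟨by simp [esize]; omega, hs⟩
  | ambR g1 =>
    rename_i e1 e2 nn
    have ha2 : alpha e2 ≤ 1 := by simp [alpha] at ha; omega
    obtain ⟨hb, hs⟩ := IH _ (by omega) _ _ _ _ ha2 g1
    exact ⟨by simp [esize]; omega, hs⟩
  | call gf gargs garity gbody =>
    rename_i fn es ws d m nb hs hb
    have hces : ∀ e ∈ es, hasCall e = false := by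
      by_contra hcc
      push_neg at hcc
      have : ¬ (es.all fun e => !hasCall e) = true := by
        simp only [List.all_eq_true]
        push_neg
        obtain ⟨e', he', hne⟩ := hcc
        exact ⟨e', he', by simp [hne]⟩
      simp [alpha, this] at ha
    obtain ⟨rfl, hbargs⟩ := noCall_args p _ _ _ _ _ hces gargs
    have hdp : d ∈ p := mem_of_getElem? gf
    have had : alpha d.body ≤ 1 := hT d hdp
    obtain ⟨hbb, hsb⟩ := IH _ (by omega) _ _ _ _ had gbody
    constructor
    · have : esize d.body ≤ maxBody p := body_le_maxBody hdp
      simp [esize]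
      calc m + nb + 1 ≤ esizeL es + (maxBody p + maxBody p * hb.length) + 1 := by omega
        _ = esizeL es + 1 + maxBody p * (hb.length + 1) := by ring
    · intro h0 f ws' h1 hh
      simp only [List.nil_append] at hh
      cases h0 with
      | nil =>
        simp at hh
        obtain ⟨⟨rfl, rfl⟩, rfl⟩ := hh
        exact ⟨d, nb, gf, garity, gbody⟩
      | cons c h0' =>
        simp at hh
        obtain ⟨-, hh⟩ := hh
        exact hsb h0' f ws' h1 hh

def VS (x : List Bool) : Finset Val :=
  (x.tails.map Val.str).toFinset ∪ {Val.bool true, Val.bool false}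

theorem mem_VS {x : List Bool} {v : Val} (h : v ∈ Vx x) : v ∈ VS x := by
  rcases h with ⟨b, rfl⟩ | ⟨s, rfl, hs⟩
  · cases b <;> simp [VS]
  · simp only [VS, Finset.mem_union, List.mem_toFinset, List.mem_map]
    exact Or.inl ⟨s, (List.mem_tails s x).2 hs, rfl⟩

theorem card_VS (x : List Bool) : (VS x).card ≤ x.length + 3 := by
  calc (VS x).card ≤ (x.tails.map Val.str).toFinset.card + ({Val.bool true, Val.bool false} : Finset Val).card :=
        Finset.card_union_le _ _
    _ ≤ (x.tails.map Val.str).length + 2 := by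
        have h1 := List.toFinset_card_le (x.tails.map Val.str)
        have h2 : ({Val.bool true, Val.bool false} : Finset Val).card ≤ 2 :=
          le_trans (Finset.card_insert_le _ _) (by simp)
        omega
    _ = x.length + 3 := by simp [List.length_tails]

def listsUpTo (S : Finset Val) : Nat → Finset (List Val)
  | 0 => {[]}
  | k + 1 => {([] : List Val)} ∪ (S ×ˢ listsUpTo S k).image (fun q => q.1 :: q.2)

theorem mem_listsUpTo {S : Finset Val} : ∀ {k : ℕ} {l : List Val}, l.length ≤ k →
    (∀ u ∈ l, u ∈ S) → l ∈ listsUpTo S k := by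
  intro k
  induction k with
  | zero =>
    intro l hl _
    have : l = [] := List.length_eq_zero_iff.mp (Nat.le_zero.mp hl)
    subst this
    simp [listsUpTo]
  | succ k ih =>
    intro l hl hS
    cases l with
    | nil => simp [listsUpTo]
    | cons a l =>
      simp only [listsUpTo, Finset.mem_union, Finset.mem_image]
      refine Or.inr ⟨(a, l), ?_, rfl⟩
      rw [Finset.mem_product]
      refine ⟨hS a (by simp), ih (by show l.length ≤ k; simp at hl; omega) (fun u hu => hS u (by simp [hu]))⟩

theorem card_listsUpTo (S : Finset Val) : ∀ k, (listsUpTo S k).card ≤ (S.card + 1) ^ k := by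
  intro k
  induction k with
  | zero => simp [listsUpTo]
  | succ k ih =>
    have h1 : (listsUpTo S (k+1)).card ≤ 1 + S.card * (listsUpTo S k).card := by
      calc (listsUpTo S (k+1)).card
          ≤ ({([] : List Val)} : Finset (List Val)).card +
            ((S ×ˢ listsUpTo S k).image (fun q => q.1 :: q.2)).card := Finset.card_union_le _ _
        _ ≤ 1 + (S ×ˢ listsUpTo S k).card := by
            have h := Finset.card_image_le (s := S ×ˢ listsUpTo S k) (f := fun q => q.1 :: q.2)
            have h0 : ({([] : List Val)} : Finset (List Val)).card = 1 := rfl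
            omega
        _ = 1 + S.card * (listsUpTo S k).card := by rw [Finset.card_product]
    have h2 : (S.card + 1) ^ (k+1) = (S.card + 1) ^ k + S.card * (S.card + 1) ^ k := by ring
    have h3 : 1 ≤ (S.card + 1) ^ k := Nat.one_le_pow _ _ (by omega)
    have h4 : S.card * (listsUpTo S k).card ≤ S.card * (S.card + 1) ^ k :=
      Nat.mul_le_mul_left _ ih
    omega

theorem hist_nodup (p : Prog) (hcf : CFProg p) {v : Val} {h : List (Nat × List Val)}
    (hsuffix : ∀ h0 f ws h1, h = h0 ++ (f, ws) :: h1 →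
      ∃ d n', p[f]? = some d ∧ ws.length = d.arity ∧ EvalH p ws d.body v n' h1) :
    h.Nodup := by
  rw [List.nodup_iff_injective_get]
  intro i j hij
  have key : ∀ i : Fin h.length, ∃ d n', p[(h.get i).1]? = some d ∧
      EvalH p (h.get i).2 d.body v n' (h.drop (i.1+1)) := by
    intro i
    have hdec : h = h.take i.1 ++ ((h.get i).1, (h.get i).2) :: h.drop (i.1+1) := by
      conv_lhs => rw [← List.take_append_drop i.1 h]
      rw [List.drop_eq_getElem_cons i.isLt]
      simp [List.get_eq_getElem]
    obtain ⟨d, n', hd, _, hb⟩ := hsuffix _ _ _ _ hdec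
    exact ⟨d, n', hd, hb⟩
  obtain ⟨d1, n1, hd1, hb1⟩ := key i
  obtain ⟨d2, n2, hd2, hb2⟩ := key j
  rw [hij] at hd1 hb1
  rw [hd2] at hd1
  obtain rfl := Option.some.inj hd1
  have hnc := hcf _ (mem_of_getElem? hd2)
  obtain ⟨-, -, hdr⟩ := evalH_det p hcf n1 n1 _ _ _ _ _ _ _ le_rfl hnc hb1 hb2
  have hlen := congrArg List.length hdr
  simp only [List.length_drop] at hlen
  have hi := i.isLt
  have hj := j.isLt
  exact Fin.ext (by omega)

theorem cftr_runs_in_polytime' (p : Prog) (hp : CFTRProg p) :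
    ∃ π : Polynomial ℕ, ∀ x n, TimeIs p x n → n ≤ π.eval x.length := by
  obtain ⟨hcf, htr⟩ := hp
  refine ⟨Polynomial.C (esize p.entry) + Polynomial.C (maxBody p * p.length) *
    (Polynomial.X + Polynomial.C 4) ^ maxArity p, ?_⟩
  intro x n hT
  obtain ⟨v, h, hrun⟩ := hT
  have halpha : alpha p.entry ≤ 1 := by
    cases p with
    | nil => decide
    | cons d p' => exact htr d List.mem_cons_self
  obtain ⟨hsize, hsuffix⟩ := tail_eval p htr _ _ _ _ _ halpha hrun
  have hnodup := hist_nodup p hcf hsuffix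
  have hok : HistOK p x h := (vx_eval p x _ _ _ _ _ (by
      intro u hu
      simp at hu
      subst hu
      exact Or.inr ⟨x, rfl, List.suffix_refl x⟩) hrun).2
  have hsub : h.toFinset ⊆ Finset.range p.length ×ˢ listsUpTo (VS x) (maxArity p) := by
    intro c hc
    rw [List.mem_toFinset] at hc
    obtain ⟨⟨d, hd, hlen⟩, hvx⟩ := hok c hc
    rw [Finset.mem_product]
    constructor
    · rw [Finset.mem_range]
      exact (List.getElem?_eq_some_iff.1 hd).1
    · exact mem_listsUpTo (by rw [hlen]; exact arity_le_maxArity (mem_of_getElem? hd))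
        (fun u hu => mem_VS (hvx u hu))
  have hlen : h.length ≤ p.length * (x.length + 4) ^ maxArity p := by
    calc h.length = h.toFinset.card := (List.toFinset_card_of_nodup hnodup).symm
      _ ≤ (Finset.range p.length ×ˢ listsUpTo (VS x) (maxArity p)).card :=
          Finset.card_le_card hsub
      _ = p.length * (listsUpTo (VS x) (maxArity p)).card := by
          rw [Finset.card_product, Finset.card_range]
      _ ≤ p.length * ((VS x).card + 1) ^ maxArity p :=
          Nat.mul_le_mul_left _ (card_listsUpTo _ _)
      _ ≤ p.length * (x.length + 4) ^ maxArity p := by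
          refine Nat.mul_le_mul_left _ (Nat.pow_le_pow_left ?_ _)
          have := card_VS x
          omega
  have hfin : n ≤ esize p.entry + maxBody p * (p.length * (x.length + 4) ^ maxArity p) :=
    le_trans hsize (Nat.add_le_add_left (Nat.mul_le_mul_left _ hlen) _)
  have heval : (Polynomial.C (esize p.entry) + Polynomial.C (maxBody p * p.length) *
      (Polynomial.X + Polynomial.C 4) ^ maxArity p).eval x.length =
      esize p.entry + maxBody p * p.length * (x.length + 4) ^ maxArity p := by
    simp
  rw [heval, mul_assoc]
  exact hfin

/-- every terminating CFTR program runs in native time polynomial in the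
length of its input. -/
theorem cftr_runs_in_polytime (p : Prog) (hp : CFTRProg p)
    (hterm : ∀ x : List Bool, ∃ v, Run p x v) :
    ∃ π : Polynomial ℕ, ∀ x n, TimeIs p x n → n ≤ π.eval x.length := by
  exact cftr_runs_in_polytime' p hp
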